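/- Let i, j ∈ Fin (n+1) with i ≤ j, and suppose c : Fin (n+1) → R satisfies A i k * A j k = ∑_{r ∈ Fin (n+1)} (c r) * (A r k) for all k ∈ Fin (n+1). Then for every k with j < k ≤ n: (t_{k-1} − t_k) * (c k) = σ_k (c (k-1)) − c (k-1), where σ_k : R → R is the ℚ-algebra endomorphism of R determined by σ_k(t_{k-1}) = t_k and σ_k(t_m) = t_m for m ≠ k−1. (This is the paper's equation (31), c_{p_i p_j}^{p_k} = (𝔰_{p_{k-1}}^{p_k} c_{p_i p_j}^{p_{k-1}} − c_{p_i p_j}^{p_{k-1}})/(t_{k-1} − t_k), i.e., c_{p_i p_j}^{p_k} = ∂_{k-1} c_{p_i p_j}^{p_{k-1}} for the divided difference operator, recovering Tymoczko's Theorem 4.1 as a special case of the paper's results.) -/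

import Mathlib

open MvPolynomial

theorem cpn_structure_constants_divided_difference
    (n : ℕ) (hn : 1 ≤ n)
    (A : Fin (n + 1) → Fin (n + 1) → MvPolynomial (Fin (n + 1)) ℚ)
    (hA : ∀ i k : Fin (n + 1),
      A i k = if i ≤ k then ∏ j ∈ Finset.Iio i, (X j - X k) else 0)
    (i j : Fin (n + 1)) (hij : i ≤ j)
    (c : Fin (n + 1) → MvPolynomial (Fin (n + 1)) ℚ)
    (hc : ∀ k : Fin (n + 1), A i k * A j k = ∑ r : Fin (n + 1), c r * A r k)
    -- `k'` is the fixed point `p_k` with `j < k ≤ n`, and `k` is `p_{k-1}`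
    (k k' : Fin (n + 1)) (hjk : j < k') (hkk' : (k' : ℕ) = (k : ℕ) + 1) :
    (X k - X k') * c k'
      = (aeval (fun m : Fin (n + 1) => if m = k then X k' else X m)) (c k)
        - c k := by
  set σ : MvPolynomial (Fin (n+1)) ℚ →ₐ[ℚ] MvPolynomial (Fin (n+1)) ℚ :=
    aeval (fun m : Fin (n + 1) => if m = k then X k' else X m) with hσ
  have hjkv : (j : ℕ) < (k' : ℕ) := hjk
  have hjle : (j : ℕ) ≤ (k : ℕ) := by omega
  have hile : (i : ℕ) ≤ (k : ℕ) := le_trans hij hjle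
  have hik : i ≤ k := by exact hile
  have hjk2 : j ≤ k := by exact hjle
  have hkk'le : k ≤ k' := by simp only [Fin.le_def]; omega
  -- X a - X b ≠ 0 for a ≠ b
  have hXne : ∀ a b : Fin (n+1), a ≠ b → (X a - X b : MvPolynomial (Fin (n+1)) ℚ) ≠ 0 := by
    intro a b hab
    exact sub_ne_zero.mpr fun he => hab (MvPolynomial.X_injective he)
  have hAne : ∀ r m : Fin (n+1), r ≤ m → A r m ≠ 0 := by
    intro r m h
    rw [hA, if_pos h]
    rw [Finset.prod_ne_zero_iff]
    intro x hx
    rw [Finset.mem_Iio] at hx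
    exact hXne x m (Fin.ne_of_lt (lt_of_lt_of_le hx h))
  have hA0 : ∀ r m : Fin (n+1), m < r → A r m = 0 := by
    intro r m h
    rw [hA, if_neg (not_le.mpr h)]
  have hσX : ∀ m : Fin (n+1), σ (X m) = if m = k then X k' else X m := by
    intro m; rw [hσ, aeval_X]
  -- σ fixes A r m whenever m < k
  have hσA_small : ∀ r m : Fin (n+1), (m : ℕ) < (k : ℕ) → σ (A r m) = A r m := by
    intro r m hm
    rw [hA]
    split_ifs with h
    · rw [map_prod]
      refine Finset.prod_congr rfl ?_
      intro x hx
      rw [Finset.mem_Iio] at hx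
      have hxm : (x : ℕ) < (m : ℕ) := lt_of_lt_of_le hx h
      rw [map_sub, hσX, hσX, if_neg, if_neg]
      · exact fun he => by simp [Fin.ext_iff] at he; omega
      · exact fun he => by simp [Fin.ext_iff] at he; omega
    · simp
  -- σ sends A r k to A r k' for r ≤ k
  have hσA_k : ∀ r : Fin (n+1), r ≤ k → σ (A r k) = A r k' := by
    intro r hr
    rw [hA, hA, if_pos hr, if_pos (le_trans hr hkk'le), map_prod]
    refine Finset.prod_congr rfl ?_
    intro x hx
    rw [Finset.mem_Iio] at hx
    have hxk : (x : ℕ) < (k : ℕ) := lt_of_lt_of_le hx hr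
    rw [map_sub, hσX, hσX, if_pos rfl, if_neg]
    exact fun he => by simp [Fin.ext_iff] at he; omega
  -- σ fixes c r for r < k
  have key : ∀ N : ℕ, ∀ r : Fin (n+1), (r : ℕ) < N → (r : ℕ) < (k : ℕ) → σ (c r) = c r := by
    intro N
    induction N with
    | zero => intro r h; exact absurd h (Nat.not_lt_zero _)
    | succ N ih =>
      intro r hrN hrk
      have heq := congrArg σ (hc r)
      rw [map_mul, hσA_small i r hrk, hσA_small j r hrk, map_sum] at heq
      have heq2 : ∑ s : Fin (n+1), (σ (c s) - c s) * A s r = 0 := by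
        have h1 : ∑ s : Fin (n+1), σ (c s) * A s r = ∑ s : Fin (n+1), c s * A s r := by
          calc ∑ s : Fin (n+1), σ (c s) * A s r
              = ∑ s : Fin (n+1), σ (c s * A s r) := by
                refine Finset.sum_congr rfl fun s _ => ?_
                rw [map_mul, hσA_small s r hrk]
            _ = A i r * A j r := heq.symm
            _ = ∑ s : Fin (n+1), c s * A s r := hc r
        calc ∑ s : Fin (n+1), (σ (c s) - c s) * A s r
            = ∑ s : Fin (n+1), (σ (c s) * A s r - c s * A s r) := by
              refine Finset.sum_congr rfl fun s _ => ?_; ring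
          _ = ∑ s : Fin (n+1), σ (c s) * A s r - ∑ s : Fin (n+1), c s * A s r :=
              Finset.sum_sub_distrib _ _
          _ = 0 := by rw [h1, sub_self]
      have hs : ∑ s : Fin (n+1), (σ (c s) - c s) * A s r = (σ (c r) - c r) * A r r := by
        refine Finset.sum_eq_single r (fun b _ hb => ?_) (by simp)
        rcases lt_or_gt_of_ne (fun he : (b : ℕ) = (r : ℕ) => hb (Fin.ext he)) with h | h
        · have hb2 := ih b (by omega) (by omega)
          rw [hb2, sub_self, zero_mul]
        · rw [hA0 b r (by exact h), mul_zero]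
      have hsingle : (σ (c r) - c r) * A r r = 0 := hs.symm.trans heq2
      rcases mul_eq_zero.mp hsingle with h | h
      · exact sub_eq_zero.mp h
      · exact absurd h (hAne r r le_rfl)
  have key' : ∀ r : Fin (n+1), (r : ℕ) < (k : ℕ) → σ (c r) = c r :=
    fun r hr => key ((r : ℕ) + 1) r (Nat.lt_succ_self _) hr
  -- main equation
  have heqk := congrArg σ (hc k)
  rw [map_mul, hσA_k i hik, hσA_k j hjk2, map_sum] at heqk
  have main : ∑ s : Fin (n+1), (c s * A s k' - σ (c s * A s k)) = 0 := by
    rw [Finset.sum_sub_distrib, ← heqk, ← hc k', sub_self]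
  have hkne : k ≠ k' := fun he => by simp [Fin.ext_iff] at he; omega
  have hsum : ∑ s : Fin (n+1), (c s * A s k' - σ (c s * A s k))
      = (c k * A k k' - σ (c k * A k k)) + (c k' * A k' k' - σ (c k' * A k' k)) := by
    refine Fintype.sum_eq_add k k' hkne ?_
    intro x hx
    rcases lt_trichotomy ((x : ℕ)) ((k : ℕ)) with h | h | h
    · have h1 := key' x h
      rw [map_mul, h1, hσA_k x (by exact le_of_lt h), sub_self]
    · exact absurd (Fin.ext h) hx.1
    · have hxk' : (k' : ℕ) < (x : ℕ) := by
        rcases Nat.lt_or_ge ((x : ℕ)) ((k' : ℕ)) with h2 | h2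
        · omega
        · rcases Nat.eq_or_lt_of_le h2 with h3 | h3
          · exact absurd (Fin.ext h3.symm) hx.2
          · exact h3
      rw [hA0 x k' (by exact hxk'), hA0 x k (by exact h), map_mul, map_zero,
        mul_zero, mul_zero, sub_self]
  have hmain2 := hsum.symm.trans main
  simp only [map_mul, hσA_k k le_rfl, hA0 k' k (by exact Nat.lt_of_succ_le (le_of_eq hkk'.symm)),
    map_zero, mul_zero] at hmain2
  -- A k' k' = (X k - X k') * A k k'
  have hIio : Finset.Iio k' = insert k (Finset.Iio k) := by
    ext x
    simp only [Finset.mem_Iio, Finset.mem_insert, Fin.lt_def, Fin.ext_iff]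
    omega
  have hAsplit : A k' k' = (X k - X k') * A k k' := by
    rw [hA, hA, if_pos le_rfl, if_pos hkk'le, hIio,
      Finset.prod_insert (by simp)]
  rw [hAsplit] at hmain2
  have hfinal : ((X k - X k') * c k') * A k k' = (σ (c k) - c k) * A k k' := by
    linear_combination hmain2
  exact mul_right_cancel₀ (hAne k k' hkk'le) hfinal
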